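/- Let 0 ≤ α₋ ≤ β₋ and 0 ≤ α₊ ≤ β₊ be real numbers and let t ∈ ℝ. Then there exists a symmetric positive semidefinite 2×2 real matrix Q with eigenvalues α₊ and β₊ (equivalently Tr(Q) = α₊ + β₊ and det(Q) = α₊β₊) satisfying α₋·Q₁₁ + β₋·Q₂₂ = t if and only if α₋β₊ + α₊β₋ ≤ t ≤ α₋α₊ + β₋β₊. -/

import Mathlib

open Matrix

lemma psd_fin_two (y x c : ℝ) (hy : 0 ≤ y) (hx : 0 ≤ x) (hc : c ^ 2 ≤ y * x) :
    (Matrix.of ![![y, c], ![c, x]]).PosSemidef := by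
  rw [Matrix.posSemidef_iff_dotProduct_mulVec]
  constructor
  · ext i j
    fin_cases i <;> fin_cases j <;> simp [Matrix.conjTranspose_apply]
  · intro v
    have hv : dotProduct (star v) ((Matrix.of ![![y, c], ![c, x]]) *ᵥ v) =
        y * (v 0)^2 + 2 * c * (v 0) * (v 1) + x * (v 1)^2 := by
      simp [dotProduct, Matrix.mulVec, Fin.sum_univ_two]
      ring
    rw [hv]
    rcases eq_or_lt_of_le hy with h | h
    · have hc0 : c = 0 := by nlinarith [sq_nonneg c]
      rw [← h, hc0]; nlinarith [sq_nonneg (v 1)]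
    · nlinarith [sq_nonneg (y * v 0 + c * v 1), sq_nonneg (v 1), mul_pos h h]

/-- for `0 ≤ α₋ ≤ β₋`, `0 ≤ α₊ ≤ β₊` and `t ∈ ℝ`, there is a positive semidefinite
symmetric 2×2 real matrix `Q` with eigenvalues `α₊, β₊` (i.e. `Tr Q = α₊ + β₊`,
`det Q = α₊·β₊`) and `α₋·Q₁₁ + β₋·Q₂₂ = t` iff `α₋β₊ + α₊β₋ ≤ t ≤ α₋α₊ + β₋β₊`. -/
theorem range_of_invariant_t (αm βm αp βp t : ℝ)
    (h1 : 0 ≤ αm) (h2 : αm ≤ βm) (h3 : 0 ≤ αp) (h4 : αp ≤ βp) :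
    (∃ Q : Matrix (Fin 2) (Fin 2) ℝ, Q.PosSemidef ∧
      Q.trace = αp + βp ∧ Q.det = αp * βp ∧ αm * Q 0 0 + βm * Q 1 1 = t) ↔
    (αm * βp + αp * βm ≤ t ∧ t ≤ αm * αp + βm * βp) := by
  constructor
  · rintro ⟨Q, hQ, htr, hdet, ht⟩
    have hsym : Q 1 0 = Q 0 1 := by
      have := hQ.1
      have h01 := congrFun (congrFun this 0) 1
      simpa [Matrix.conjTranspose_apply] using h01
    have htr' : Q 0 0 + Q 1 1 = αp + βp := by
      simpa [Matrix.trace_fin_two] using htr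
    have hdet' : Q 0 0 * Q 1 1 - Q 0 1 ^ 2 = αp * βp := by
      rw [Matrix.det_fin_two] at hdet
      rw [hsym] at hdet
      nlinarith [hdet]
    have h00 : 0 ≤ Q 0 0 := by
      have := hQ.dotProduct_mulVec_nonneg (fun i => if i = 0 then 1 else 0)
      simpa [dotProduct, Matrix.mulVec, Fin.sum_univ_two] using this
    have h11 : 0 ≤ Q 1 1 := by
      have := hQ.dotProduct_mulVec_nonneg (fun i => if i = 1 then 1 else 0)
      simpa [dotProduct, Matrix.mulVec, Fin.sum_univ_two] using this
    have hprod : αp * βp ≤ Q 0 0 * Q 1 1 := by nlinarith [sq_nonneg (Q 0 1)]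
    have hxu : Q 1 1 ≤ βp := by nlinarith
    have hxl : αp ≤ Q 1 1 := by nlinarith
    constructor
    · nlinarith
    · nlinarith
  · rintro ⟨hl, hu⟩
    rcases eq_or_lt_of_le h2 with heq | hlt
    · -- βm = αm
      have ht : t = αm * (αp + βp) := by rw [← heq] at hl hu; linarith
      refine ⟨Matrix.of ![![βp, 0], ![0, αp]], psd_fin_two βp αp 0 (le_trans h3 h4) h3 (by nlinarith), ?_, ?_, ?_⟩
      · simp [Matrix.trace_fin_two]; ring
      · simp [Matrix.det_fin_two]; ring
      · simp only [Matrix.of_apply]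
        rw [← heq]
        simp [ht]; ring
    · set s := αp + βp with hs
      set x := (t - αm * s) / (βm - αm) with hxdef
      have hd : 0 < βm - αm := by linarith
      have hxl : αp ≤ x := by
        rw [hxdef, le_div_iff₀ hd]; nlinarith
      have hxu : x ≤ βp := by
        rw [hxdef, div_le_iff₀ hd]; nlinarith
      set y := s - x with hy
      have hyl : αp ≤ y := by simp [hy, hs]; linarith
      have hyu : y ≤ βp := by simp [hy, hs]; linarith
      have hprod : αp * βp ≤ y * x := by nlinarith
      set c := Real.sqrt (y * x - αp * βp) with hc
      have hc2 : c ^ 2 = y * x - αp * βp := Real.sq_sqrt (by linarith)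
      refine ⟨Matrix.of ![![y, c], ![c, x]],
        psd_fin_two y x c (by linarith) (by linarith) (by nlinarith [mul_nonneg h3 (le_trans h3 h4)]), ?_, ?_, ?_⟩
      · simp [Matrix.trace_fin_two, hy]
      · simp [Matrix.det_fin_two]; nlinarith
      · simp only [Matrix.of_apply]
        show αm * y + βm * x = t
        rw [hy, hxdef]
        field_simp
        ring
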